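/- Let n ≥ 1, let N = p_1·p_2···p_n be the product of the first n primes, and let a be an integer with gcd(a, N) = 1. Then the number of integers x with 0 ≤ x < N such that gcd(x − a, N) = 1 and gcd(x + a, N) = 1 equals ∏_{i=2}^{n} (p_i − 2), the product of (p − 2) over the first n primes p other than 2. -/

import Mathlib

open Finset

lemma isUnit_intCast_zmod_iff (N : ℕ) (x : ℤ) :
    IsUnit ((x : ZMod N)) ↔ Int.gcd x N = 1 := by
  rw [← Int.isCoprime_iff_gcd_eq_one]
  constructor
  · intro h
    obtain ⟨u, hu⟩ := h
    set y : ℤ := ZMod.cast ((u⁻¹ : (ZMod N)ˣ) : ZMod N) with hy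
    have h1 : ((x * y - 1 : ℤ) : ZMod N) = 0 := by
      push_cast
      rw [hy, ZMod.intCast_zmod_cast, ← hu]
      simp
    rw [ZMod.intCast_zmod_eq_zero_iff_dvd] at h1
    obtain ⟨k, hk⟩ := h1
    exact ⟨y, -k, by linarith⟩
  · rintro ⟨u, v, huv⟩
    refine IsUnit.of_mul_eq_one ((u : ℤ) : ZMod N) ?_
    have := congrArg (fun t : ℤ => (t : ZMod N)) huv
    push_cast at this
    simpa [mul_comm] using this

lemma prod_isUnit_iff' {A B : Type*} [Monoid A] [Monoid B] (p : A × B) :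
    IsUnit p ↔ IsUnit p.1 ∧ IsUnit p.2 := by
  constructor
  · intro h; exact ⟨h.map (MonoidHom.fst A B), h.map (MonoidHom.snd A B)⟩
  · rintro ⟨⟨u, hu⟩, ⟨v, hv⟩⟩
    exact ⟨⟨((u : A), (v : B)), ((↑u⁻¹ : A), (↑v⁻¹ : B)),
      by apply Prod.ext <;> simp, by apply Prod.ext <;> simp⟩,
      by apply Prod.ext <;> simp [hu, hv]⟩

noncomputable def cnt (a : ℤ) (n : ℕ) : ℕ :=
  {x : ZMod n | IsUnit (x - (a : ZMod n)) ∧ IsUnit (x + a)}.ncard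

lemma cnt_filter (a : ℤ) (n : ℕ) [NeZero n]
    [DecidablePred fun x : ZMod n => IsUnit (x - (a : ZMod n)) ∧ IsUnit (x + a)] :
    cnt a n =
      (Finset.univ.filter fun x : ZMod n =>
        IsUnit (x - (a : ZMod n)) ∧ IsUnit (x + a)).card := by
  rw [cnt, Set.ncard_eq_toFinset_card', Set.toFinset_setOf]

lemma card_Ico_filter_eq (N : ℕ) [NeZero N] (a : ℤ)
    [DecidablePred fun x : ZMod N => IsUnit (x - (a : ZMod N)) ∧ IsUnit (x + a)] :
    ((Finset.Ico (0 : ℤ) (N : ℤ)).filter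
        (fun x => Int.gcd (x - a) N = 1 ∧ Int.gcd (x + a) N = 1)).card =
      (Finset.univ.filter fun x : ZMod N =>
        IsUnit (x - (a : ZMod N)) ∧ IsUnit (x + a)).card := by
  refine Finset.card_bij (fun (x : ℤ) (_ : x ∈ _) => ((x : ZMod N))) ?_ ?_ ?_
  · intro x hx
    simp only [mem_filter, mem_Ico] at hx ⊢
    refine ⟨mem_univ _, ?_, ?_⟩
    · rw [show (x : ZMod N) - (a : ZMod N) = ((x - a : ℤ) : ZMod N) by push_cast; ring,
        isUnit_intCast_zmod_iff]
      exact hx.2.1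
    · rw [show (x : ZMod N) + (a : ZMod N) = ((x + a : ℤ) : ZMod N) by push_cast; ring,
        isUnit_intCast_zmod_iff]
      exact hx.2.2
  · intro x hx y hy hxy
    simp only [mem_filter, mem_Ico] at hx hy
    rwa [ZMod.intCast_eq_intCast_iff', Int.emod_eq_of_lt hx.1.1 hx.1.2,
      Int.emod_eq_of_lt hy.1.1 hy.1.2] at hxy
  · intro z hz
    simp only [mem_filter, mem_univ, true_and] at hz
    have hc : (((z.val : ℕ) : ℤ) : ZMod N) = z := by
      push_cast
      rw [ZMod.natCast_val, ZMod.cast_id]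
    refine ⟨(z.val : ℤ), ?_, hc⟩
    simp only [mem_filter, mem_Ico]
    refine ⟨⟨Int.ofNat_nonneg _, Int.ofNat_lt.mpr z.val_lt⟩, ?_, ?_⟩
    · rw [← isUnit_intCast_zmod_iff,
        show (((z.val : ℤ) - a : ℤ) : ZMod N) = z - (a : ZMod N) by push_cast [hc]; ring]
      exact hz.1
    · rw [← isUnit_intCast_zmod_iff,
        show (((z.val : ℤ) + a : ℤ) : ZMod N) = z + (a : ZMod N) by push_cast [hc]; ring]
      exact hz.2

lemma cnt_mul (a : ℤ) (m n : ℕ) [NeZero m] [NeZero n] (h : Nat.Coprime m n) :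
    cnt a (m * n) = cnt a m * cnt a n := by
  classical
  let e := (ZMod.chineseRemainder h).toEquiv
  set S : Set (ZMod (m * n)) :=
    {x : ZMod (m * n) | IsUnit (x - (a : ZMod (m * n))) ∧ IsUnit (x + a)} with hS
  set S₁ : Set (ZMod m) := {x : ZMod m | IsUnit (x - (a : ZMod m)) ∧ IsUnit (x + a)} with hS₁
  set S₂ : Set (ZMod n) := {x : ZMod n | IsUnit (x - (a : ZMod n)) ∧ IsUnit (x + a)} with hS₂
  have himg : e '' S = S₁ ×ˢ S₂ := by
    ext z
    rw [Equiv.image_eq_preimage_symm]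
    have hsymm : ∀ w : ZMod m × ZMod n, e.symm w = (ZMod.chineseRemainder h).symm w := fun _ => rfl
    simp only [Set.mem_preimage, hS, hS₁, hS₂, Set.mem_setOf_eq, Set.mem_prod, hsymm]
    have h1 : (ZMod.chineseRemainder h).symm z - (a : ZMod (m * n)) =
        (ZMod.chineseRemainder h).symm (z - ((a : ZMod m), (a : ZMod n))) := by
      rw [map_sub]
      congr 1
      rw [show (((a : ZMod m), (a : ZMod n)) : ZMod m × ZMod n) = ((a : ℤ) : ZMod m × ZMod n) by
        ext <;> simp, map_intCast]
    have h2 : (ZMod.chineseRemainder h).symm z + (a : ZMod (m * n)) =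
        (ZMod.chineseRemainder h).symm (z + ((a : ZMod m), (a : ZMod n))) := by
      rw [map_add]
      congr 1
      rw [show (((a : ZMod m), (a : ZMod n)) : ZMod m × ZMod n) = ((a : ℤ) : ZMod m × ZMod n) by
        ext <;> simp, map_intCast]
    have hu : ∀ w : ZMod m × ZMod n, IsUnit ((ZMod.chineseRemainder h).symm w) ↔ IsUnit w := by
      intro w
      constructor
      · intro hw
        simpa using hw.map (ZMod.chineseRemainder h).toRingHom
      · intro hw
        exact hw.map (ZMod.chineseRemainder h).symm.toRingHom
    rw [h1, h2, hu, hu, prod_isUnit_iff', prod_isUnit_iff']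
    simp only [Prod.fst_sub, Prod.snd_sub, Prod.fst_add, Prod.snd_add]
    tauto
  have : cnt a (m * n) = Nat.card S := (Nat.card_coe_set_eq _).symm
  rw [this, Nat.card_congr ((Equiv.image e S).trans (by rw [himg])),
    Nat.card_congr (Equiv.Set.prod S₁ S₂), Nat.card_prod]
  rw [cnt, cnt, ← Nat.card_coe_set_eq, ← Nat.card_coe_set_eq]

lemma cnt_two (a : ℤ) (ha : ¬ (2 : ℤ) ∣ a) : cnt a 2 = 1 := by
  classical
  haveI : Fact (Nat.Prime 2) := ⟨Nat.prime_two⟩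
  have ha1 : (a : ZMod 2) = 1 := by
    have h0 : (a : ZMod 2) ≠ 0 := by
      rw [Ne, ZMod.intCast_zmod_eq_zero_iff_dvd]
      exact_mod_cast ha
    have h01 : ∀ y : ZMod 2, y = 0 ∨ y = 1 := fun y => by fin_cases y; exacts [Or.inl rfl, Or.inr rfl]
    rcases h01 (a : ZMod 2) with h | h
    · exact absurd h h0
    · exact h
  rw [cnt_filter]
  have : (Finset.univ.filter fun x : ZMod 2 =>
      IsUnit (x - (a : ZMod 2)) ∧ IsUnit (x + a)) = {0} := by
    ext x
    simp only [mem_filter, mem_univ, true_and, mem_singleton, ha1, isUnit_iff_ne_zero]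
    have h01 : ∀ y : ZMod 2, y = 0 ∨ y = 1 := fun y => by fin_cases y; exacts [Or.inl rfl, Or.inr rfl]
    rcases h01 x with h | h <;> subst h <;> norm_num
  rw [this, Finset.card_singleton]

lemma cnt_odd_prime (p : ℕ) (hp : p.Prime) (hodd : p ≠ 2) (a : ℤ)
    (hdvd : ¬ (p : ℤ) ∣ a) : cnt a p = p - 2 := by
  classical
  haveI : Fact p.Prime := ⟨hp⟩
  rw [cnt_filter]
  have ha0 : (a : ZMod p) ≠ 0 := by
    rw [Ne, ZMod.intCast_zmod_eq_zero_iff_dvd]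
    exact hdvd
  have hne : (a : ZMod p) ≠ -(a : ZMod p) := by
    intro h
    have h2 : (2 : ZMod p) * (a : ZMod p) = 0 := by
      have := sub_eq_zero.mpr h
      rw [sub_neg_eq_add] at this
      rw [two_mul]
      exact this
    rcases mul_eq_zero.mp h2 with h2' | h2'
    · have : ((2 : ℕ) : ZMod p) = 0 := by exact_mod_cast h2'
      rw [ZMod.natCast_eq_zero_iff] at this
      exact hodd ((Nat.prime_dvd_prime_iff_eq hp Nat.prime_two).mp this)
    · exact ha0 h2'
  have hfe : (Finset.univ.filter fun x : ZMod p =>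
      IsUnit (x - (a : ZMod p)) ∧ IsUnit (x + a)) =
      Finset.univ \ {(a : ZMod p), -(a : ZMod p)} := by
    ext x
    simp only [mem_filter, mem_univ, true_and, mem_sdiff, mem_insert, mem_singleton,
      isUnit_iff_ne_zero, sub_ne_zero, not_or]
    constructor
    · rintro ⟨h1, h2⟩
      exact ⟨h1, fun h => h2 (by rw [h]; ring)⟩
    · rintro ⟨h1, h2⟩
      refine ⟨h1, fun h => h2 ?_⟩
      have : x = -(a : ZMod p) := by linear_combination h
      exact this
  rw [hfe, Finset.card_sdiff_of_subset (Finset.subset_univ _), Finset.card_univ, ZMod.card,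
    Finset.card_insert_of_notMem (by simpa using hne), Finset.card_singleton]

lemma cnt_prod (k : ℕ) (hk : 1 ≤ k) (a : ℤ)
    (hg : Int.gcd a ((∏ i ∈ Finset.range k, Nat.nth Nat.Prime i : ℕ) : ℤ) = 1) :
    cnt a (∏ i ∈ Finset.range k, Nat.nth Nat.Prime i) =
      ∏ i ∈ Finset.Ico 1 k, (Nat.nth Nat.Prime i - 2) := by
  induction k with
  | zero => omega
  | succ k ih =>
    rcases Nat.eq_or_lt_of_le hk with hk1 | hk2
    · -- k + 1 = 1
      have hk0 : k = 0 := by omega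
      subst hk0
      simp only [zero_add, Finset.prod_range_one, Nat.nth_prime_zero_eq_two] at hg ⊢
      rw [Finset.Ico_self, Finset.prod_empty]
      apply cnt_two
      intro hdvd
      have : (2 : ℤ) ∣ Int.gcd a ((2 : ℕ) : ℤ) := Int.dvd_coe_gcd hdvd (by norm_num)
      rw [hg] at this
      norm_num at this
    · have hk' : 1 ≤ k := by omega
      set m : ℕ := ∏ i ∈ Finset.range k, Nat.nth Nat.Prime i with hm
      set p : ℕ := Nat.nth Nat.Prime k with hp
      have hpp : p.Prime := Nat.prime_nth_prime k
      have hprime : ∀ i, (Nat.nth Nat.Prime i).Prime := Nat.prime_nth_prime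
      have hmpos : 0 < m := Finset.prod_pos fun i _ => (hprime i).pos
      have hsucc : (∏ i ∈ Finset.range (k + 1), Nat.nth Nat.Prime i) = m * p := by
        rw [hm, hp, Finset.prod_range_succ]
      haveI : NeZero m := ⟨hmpos.ne'⟩
      haveI : NeZero p := ⟨hpp.pos.ne'⟩
      have hcop : Nat.Coprime m p := by
        apply Nat.Coprime.prod_left
        intro i hi
        rw [Nat.coprime_primes (hprime i) hpp]
        intro heq
        have hik : i < k := Finset.mem_range.mp hi
        have hlt := (Nat.nth_lt_nth Nat.infinite_setOf_prime).mpr hik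
        exact absurd heq (Nat.ne_of_lt hlt)
      rw [hsucc] at hg
      have hgm : Int.gcd a (m : ℤ) = 1 := by
        rw [← Int.isCoprime_iff_gcd_eq_one] at hg ⊢
        push_cast at hg
        exact hg.of_mul_right_left
      have hgp : Int.gcd a (p : ℤ) = 1 := by
        rw [← Int.isCoprime_iff_gcd_eq_one] at hg ⊢
        push_cast at hg
        exact hg.of_mul_right_right
      have hpodd : p ≠ 2 := by
        have h2 : Nat.nth Nat.Prime 0 < Nat.nth Nat.Prime k :=
          (Nat.nth_lt_nth Nat.infinite_setOf_prime).mpr hk'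
        rw [Nat.nth_prime_zero_eq_two] at h2
        exact fun h => by rw [hp] at h; omega
      have hdvd : ¬ (p : ℤ) ∣ a := by
        intro hdvd
        have : (p : ℤ) ∣ Int.gcd a ((p : ℕ) : ℤ) := Int.dvd_coe_gcd hdvd dvd_rfl
        rw [hgp] at this
        have := Int.le_of_dvd one_pos this
        have := hpp.two_le
        omega
      rw [hsucc, cnt_mul a m p hcop, ih hk' hgm, cnt_odd_prime p hpp hpodd a hdvd,
        Finset.prod_Ico_succ_top hk']

/-- Paper's Corollary 2: with `N` the product of the first `n` primes and `a`
an integer coprime to `N`, the number of integers `0 ≤ x < N` with both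
`x - a` and `x + a` coprime to `N` equals `∏_{i=2}^{n} (p_i - 2)`. -/
theorem count_shifted_twin_nPrimes (n : ℕ) (hn : 1 ≤ n)
    (N : ℕ) (hN : N = ∏ i ∈ Finset.range n, Nat.nth Nat.Prime i)
    (a : ℤ) (ha : Int.gcd a N = 1) :
    ((Finset.Ico (0 : ℤ) (N : ℤ)).filter
        (fun x => Int.gcd (x - a) N = 1 ∧ Int.gcd (x + a) N = 1)).card =
      ∏ i ∈ Finset.Ico 1 n, (Nat.nth Nat.Prime i - 2) := by
  classical
  have hNpos : 0 < N := by
    rw [hN]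
    exact Finset.prod_pos fun i _ => (Nat.prime_nth_prime i).pos
  haveI : NeZero N := ⟨hNpos.ne'⟩
  rw [card_Ico_filter_eq N a, ← cnt_filter a N]
  subst hN
  exact cnt_prod n hn a ha
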